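/- Let k ≥ 2, ε_r > 0, let P_X be a distribution on {1,…,k} with p_i = P_X(i) > 0 and p_1 ≤ … ≤ p_k, and let P_{Y|X} be the k-randomized response mechanism with α = e^{ε_r}/(e^{ε_r}+k−1), β = 1/(e^{ε_r}+k−1), and q_j = β + (α−β)p_j. Then for every δ ∈ (q_1, 1), the PML envelope satisfies ε_c(δ) ≤ min{ log(kα/δ), log(α/q_1) }. -/

import Mathlib

open Real Finset
open scoped Classical

noncomputable section

/-- Marginal distribution of the first coordinate of a joint distribution. -/
def margX {X Y : Type} [Fintype Y] (P : X → Y → ℝ) (x : X) : ℝ := ∑ y, P x y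

/-- Marginal distribution of the second coordinate of a joint distribution. -/
def margY {X Y : Type} [Fintype X] (P : X → Y → ℝ) (y : Y) : ℝ := ∑ x, P x y

/-- `P` is a joint probability distribution on `X × Y`. -/
def IsJoint {X Y : Type} [Fintype X] [Fintype Y] (P : X → Y → ℝ) : Prop :=
  (∀ x y, 0 ≤ P x y) ∧ (∑ x, ∑ y, P x y) = 1

/-- Conditional probability `P_{Y|X=x}(y)` of the second coordinate given the first. -/
def condYX {X Y : Type} [Fintype Y] (P : X → Y → ℝ) (x : X) (y : Y) : ℝ :=
  P x y / margX P x

/-- Pointwise maximal leakage of the outcome `y`: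
`ℓ(X → y) = log (max_x P_{Y|X=x}(y) / P_Y(y))`. -/
def pml {X Y : Type} [Fintype X] [Fintype Y] (P : X → Y → ℝ) (y : Y) : ℝ :=
  Real.log ((⨆ x, condYX P x y) / margY P y)

/-- `K` is a Markov kernel (a conditional distribution). -/
def IsKernel {Y Z : Type} [Fintype Z] (K : Y → Z → ℝ) : Prop :=
  (∀ y z, 0 ≤ K y z) ∧ ∀ y, (∑ z, K y z) = 1

/-- Joint distribution of `(X, Z)` obtained by post-processing `Y` with the kernel `K`
(marginalizing out `Y`); this encodes the Markov chain `X - Y - Z`. -/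
def pushKernel {X Y Z : Type} [Fintype Y] (P : X → Y → ℝ) (K : Y → Z → ℝ)
    (x : X) (z : Z) : ℝ :=
  ∑ y, P x y * K y z

/-- Left-continuous quantile of the leakage random variable:
`ubar ε_Z(δ) = inf {t ≥ 0 : ℙ(ℓ(Z) ≤ t) ≥ 1 - δ}`. -/
def ubarEps {X Z : Type} [Fintype X] [Fintype Z] (Q : X → Z → ℝ) (δ : ℝ) : ℝ :=
  sInf {t : ℝ | 0 ≤ t ∧
    1 - δ ≤ ∑ z ∈ Finset.univ.filter (fun z => pml Q z ≤ t), margY Q z}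

/-- The PML envelope: the supremum of the left-continuous leakage quantile over all
finite post-processings `Z` of `Y` (i.e., over all Markov chains `X - Y - Z`). -/
def pmlEnvelope {X Y : Type} [Fintype X] [Fintype Y] (P : X → Y → ℝ) (δ : ℝ) : ℝ :=
  sSup {e : ℝ | ∃ (n : ℕ) (K : Y → Fin n → ℝ),
    IsKernel K ∧ e = ubarEps (pushKernel P K) δ}

set_option maxHeartbeats 1000000 in
/-- For the `k`-randomized response mechanism with parameter `ε_r > 0`
and a prior `p₁ ≤ … ≤ p_k` with positive entries, where
`α = e^{ε_r}/(e^{ε_r}+k-1)`, `β = 1/(e^{ε_r}+k-1)`, `q_j = β + (α-β) p_j`,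
for every `δ ∈ (q₁, 1)` the PML envelope satisfies
`ε_c(δ) ≤ min {log (k α / δ), log (α / q₁)}`. -/
theorem pmlEnvelope_krr_upper_bound
    (k : ℕ) (hk : 2 ≤ k) (εr : ℝ) (hεr : 0 < εr)
    (p : Fin k → ℝ) (hp : ∀ i, 0 < p i) (hpsum : ∑ i, p i = 1) (hmono : Monotone p)
    (α β : ℝ)
    (hα : α = Real.exp εr / (Real.exp εr + k - 1))
    (hβ : β = 1 / (Real.exp εr + k - 1))
    (q : Fin k → ℝ) (hq : ∀ j, q j = β + (α - β) * p j)
    (δ : ℝ) (hδl : q ⟨0, by omega⟩ < δ) (hδu : δ < 1) :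
    pmlEnvelope (fun i j : Fin k => p i * (if j = i then α else β)) δ
      ≤ min (Real.log (k * α / δ)) (Real.log (α / q ⟨0, by omega⟩)) := by
  have hk0 : 0 < k := by omega
  haveI : Nonempty (Fin k) := ⟨⟨0, hk0⟩⟩
  have hk2 : (2:ℝ) ≤ (k:ℝ) := by exact_mod_cast hk
  have hE1 : 1 < Real.exp εr := by
    calc (1:ℝ) = Real.exp 0 := Real.exp_zero.symm
    _ < Real.exp εr := Real.exp_lt_exp.2 hεr
  have hD : (0:ℝ) < Real.exp εr + k - 1 := by linarith
  have h0β : 0 < β := by rw [hβ]; positivity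
  have hβα : β < α := by
    rw [hα, hβ, div_lt_div_iff₀ hD hD]
    nlinarith
  have hα1 : α ≤ 1 := by rw [hα, div_le_one hD]; linarith
  have hnorm : (k:ℝ) * β + (α - β) = 1 := by
    rw [hα, hβ]; field_simp; ring
  set i0 : Fin k := ⟨0, hk0⟩ with hi0
  have hp1le : ∀ i, p i0 ≤ p i := fun i => hmono (show i0 ≤ i from Fin.le_def.2 (Nat.zero_le _))
  have hp1le1 : p i0 ≤ 1 := by
    rw [← hpsum]
    exact Finset.single_le_sum (fun i _ => (hp i).le) (Finset.mem_univ i0)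
  have hq1pos : 0 < q i0 := by rw [hq]; nlinarith [hp i0]
  have hq1α : q i0 ≤ α := by rw [hq]; nlinarith [hp i0, hp1le1]
  have hkα1 : 1 ≤ (k:ℝ) * α := by
    rw [hα, ← mul_div_assoc, le_div_iff₀ hD]; nlinarith
  have hδ0 : 0 < δ := hq1pos.trans hδl
  have hb1 : 0 ≤ Real.log ((k:ℝ) * α / δ) :=
    Real.log_nonneg (by rw [le_div_iff₀ hδ0]; nlinarith)
  have hb2 : 0 ≤ Real.log (α / q i0) :=
    Real.log_nonneg ((one_le_div hq1pos).2 hq1α)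
  set P : Fin k → Fin k → ℝ := fun i j => p i * (if j = i then α else β) with hP
  have hB : (0:ℝ) ≤ min (Real.log ((k:ℝ) * α / δ)) (Real.log (α / q i0)) :=
    le_min hb1 hb2
  apply Real.sSup_le _ hB
  rintro e ⟨n, K, hK, rfl⟩
  set Q : Fin k → Fin n → ℝ := pushKernel P K with hQ
  set S : Fin n → ℝ := fun z => ∑ y, K y z with hS
  set T : Fin n → ℝ := fun z => ∑ x, p x * K x z with hT
  have hS_nn : ∀ z, 0 ≤ S z := fun z => Finset.sum_nonneg fun y _ => hK.1 y z
  have hT_nn : ∀ z, 0 ≤ T z :=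
    fun z => Finset.sum_nonneg fun x _ => mul_nonneg (hp x).le (hK.1 x z)
  have hKS : ∀ x z, K x z ≤ S z := fun x z =>
    Finset.single_le_sum (fun y _ => hK.1 y z) (Finset.mem_univ x)
  have hQxz : ∀ x z, Q x z = p x * (β * S z + (α - β) * K x z) := by
    intro x z
    rw [hQ]
    unfold pushKernel
    have : ∀ y : Fin k, P x y * K y z
        = p x * β * K y z + (if y = x then p x * (α - β) * K y z else 0) := by
      intro y
      by_cases h : y = x <;> simp [hP, h] <;> ring
    rw [Finset.sum_congr rfl fun y _ => this y, Finset.sum_add_distrib,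
      Finset.sum_ite_eq' Finset.univ x (fun y => p x * (α - β) * K y z),
      ← Finset.mul_sum]
    simp only [Finset.mem_univ, if_pos]
    rw [hS]; ring
  have hSsum : ∑ z, S z = (k:ℝ) := by
    rw [hS]
    rw [Finset.sum_comm]
    simp [hK.2, Finset.card_univ]
  have hTsum : ∑ z, T z = 1 := by
    rw [hT]
    rw [Finset.sum_comm]
    have : ∀ x : Fin k, ∑ z, p x * K x z = p x := by
      intro x; rw [← Finset.mul_sum, hK.2 x, mul_one]
    rw [Finset.sum_congr rfl fun x _ => this x, hpsum]
  have hmargX : ∀ x, margX Q x = p x := by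
    intro x
    unfold margX
    rw [Finset.sum_congr rfl fun z _ => hQxz x z]
    rw [← Finset.mul_sum, Finset.sum_add_distrib, ← Finset.mul_sum, ← Finset.mul_sum,
      hSsum]
    rw [hK.2 x]
    linear_combination p x * hnorm
  have hcond : ∀ x z, condYX Q x z = β * S z + (α - β) * K x z := by
    intro x z
    unfold condYX
    rw [hQxz, hmargX, mul_div_cancel_left₀ _ (hp x).ne']
  have hcond_nn : ∀ x z, 0 ≤ condYX Q x z := by
    intro x z
    rw [hcond]
    have := hK.1 x z
    nlinarith [hS_nn z]
  have hmargY : ∀ z, margY Q z = β * S z + (α - β) * T z := by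
    intro z
    unfold margY
    calc ∑ x, Q x z = ∑ x, (β * S z * p x + (α - β) * (p x * K x z)) := by
          refine Finset.sum_congr rfl fun x _ => ?_
          rw [hQxz]; ring
    _ = β * S z * (∑ x, p x) + (α - β) * T z := by
          rw [Finset.sum_add_distrib, ← Finset.mul_sum, ← Finset.mul_sum, hT]
    _ = β * S z + (α - β) * T z := by rw [hpsum]; ring
  have hmargY_nn : ∀ z, 0 ≤ margY Q z := by
    intro z
    rw [hmargY]
    nlinarith [hS_nn z, hT_nn z]
  have hsum_margY : ∑ z, margY Q z = 1 := by
    rw [Finset.sum_congr rfl fun z _ => hmargY z, Finset.sum_add_distrib,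
      ← Finset.mul_sum, ← Finset.mul_sum, hSsum, hTsum]
    linear_combination hnorm
  have hbdd : ∀ z, BddAbove (Set.range fun x => condYX Q x z) :=
    fun z => (Set.finite_range _).bddAbove
  have hsup_nn : ∀ z, 0 ≤ ⨆ x, condYX Q x z :=
    fun z => le_trans (hcond_nn i0 z) (le_ciSup (hbdd z) i0)
  have hsup_attain : ∀ z, ∃ x0, (⨆ x, condYX Q x z) = condYX Q x0 z := by
    intro z
    obtain ⟨x0, hx0⟩ := Finite.exists_max (fun x => condYX Q x z)
    exact ⟨x0, le_antisymm (ciSup_le hx0) (le_ciSup (hbdd z) x0)⟩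
  have hsum_sup : ∑ z, (⨆ x, condYX Q x z) ≤ (k:ℝ) * α := by
    calc ∑ z, (⨆ x, condYX Q x z) ≤ ∑ z, α * S z := by
          refine Finset.sum_le_sum fun z _ => ?_
          obtain ⟨x0, hx0⟩ := hsup_attain z
          rw [hx0, hcond]
          nlinarith [hKS x0 z, hS_nn z, hK.1 x0 z]
    _ = (k:ℝ) * α := by rw [← Finset.mul_sum, hSsum]; ring
  have hA : ∀ x z, condYX Q x z * q i0 ≤ α * margY Q z := by
    intro x z
    rw [hcond, hmargY, hq]
    have h1 : p i0 * K x z ≤ T z := by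
      calc p i0 * K x z ≤ p x * K x z :=
            mul_le_mul_of_nonneg_right (hp1le x) (hK.1 x z)
      _ ≤ T z := Finset.single_le_sum
            (fun i _ => mul_nonneg (hp i).le (hK.1 i z)) (Finset.mem_univ x)
    have h2 : K x z ≤ S z := hKS x z
    have hαβ0 : 0 ≤ α - β := sub_nonneg.2 hβα.le
    have hα0 : 0 ≤ α := le_trans h0β.le hβα.le
    nlinarith [mul_nonneg (mul_nonneg hα0 hαβ0) (sub_nonneg.2 h1),
      mul_nonneg (mul_nonneg (mul_nonneg h0β.le hαβ0) (sub_nonneg.2 hp1le1))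
        (sub_nonneg.2 h2), hK.1 x z, hS_nn z]
  -- membership of the bound in the quantile set
  have hmem : ∀ t : ℝ, 0 ≤ t →
      (1 - δ ≤ ∑ z ∈ Finset.univ.filter (fun z => pml Q z ≤ t), margY Q z) →
      ubarEps Q δ ≤ t := by
    intro t ht hmass
    exact csInf_le ⟨0, fun s hs => hs.1⟩ ⟨ht, hmass⟩
  rcases le_total (Real.log ((k:ℝ) * α / δ)) (Real.log (α / q i0)) with hcmp | hcmp
  · -- min is log(kα/δ); Markov-type mass bound
    rw [min_eq_left hcmp]
    set b1 := Real.log ((k:ℝ) * α / δ) with hb1def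
    apply hmem _ hb1
    have hkα0 : (0:ℝ) < (k:ℝ) * α := lt_of_lt_of_le one_pos hkα1
    have hbadle : ∀ z ∈ Finset.univ.filter (fun z => ¬ pml Q z ≤ b1),
        margY Q z ≤ δ / ((k:ℝ) * α) * (⨆ x, condYX Q x z) := by
      intro z hz
      rw [Finset.mem_filter] at hz
      have hgt : b1 < pml Q z := lt_of_not_ge hz.2
      have hr_nn : 0 ≤ (⨆ x, condYX Q x z) / margY Q z :=
        div_nonneg (hsup_nn z) (hmargY_nn z)
      have hr1 : 1 < (⨆ x, condYX Q x z) / margY Q z := by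
        by_contra hle
        push_neg at hle
        have h0 : pml Q z ≤ 0 := Real.log_nonpos hr_nn hle
        linarith [lt_of_le_of_lt hb1 hgt]
      have hm0 : 0 < margY Q z := by
        rcases (hmargY_nn z).eq_or_lt with h | h
        · rw [← h, div_zero] at hr1; linarith
        · exact h
      have hrpos : 0 < (⨆ x, condYX Q x z) / margY Q z := lt_trans one_pos hr1
      have hkαδ : 0 < (k:ℝ) * α / δ := div_pos hkα0 hδ0
      have hgt2 : (k:ℝ) * α / δ < (⨆ x, condYX Q x z) / margY Q z := by
        have h2 := Real.exp_lt_exp.2 hgt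
        rwa [hb1def, pml, Real.exp_log hkαδ, Real.exp_log hrpos] at h2
      rw [div_lt_div_iff₀ hδ0 hm0] at hgt2
      rw [div_mul_eq_mul_div, le_div_iff₀ hkα0]
      nlinarith
    have hsplit := Finset.sum_filter_add_sum_filter_not Finset.univ
      (fun z => pml Q z ≤ b1) (fun z => margY Q z)
    have hbad : ∑ z ∈ Finset.univ.filter (fun z => ¬ pml Q z ≤ b1), margY Q z ≤ δ := by
      calc ∑ z ∈ Finset.univ.filter (fun z => ¬ pml Q z ≤ b1), margY Q z
          ≤ ∑ z ∈ Finset.univ.filter (fun z => ¬ pml Q z ≤ b1),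
              δ / ((k:ℝ) * α) * (⨆ x, condYX Q x z) :=
            Finset.sum_le_sum hbadle
      _ ≤ ∑ z, δ / ((k:ℝ) * α) * (⨆ x, condYX Q x z) :=
            Finset.sum_le_sum_of_subset_of_nonneg (Finset.filter_subset _ _)
              (fun z _ _ => mul_nonneg (by positivity) (hsup_nn z))
      _ = δ / ((k:ℝ) * α) * ∑ z, (⨆ x, condYX Q x z) := by rw [Finset.mul_sum]
      _ ≤ δ / ((k:ℝ) * α) * ((k:ℝ) * α) :=
            mul_le_mul_of_nonneg_left hsum_sup (by positivity)
      _ = δ := by field_simp; exact div_self (lt_trans h0β hβα).ne'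
    rw [hsum_margY] at hsplit
    linarith
  · -- min is log(α/q1); every outcome satisfies the bound
    rw [min_eq_right hcmp]
    apply hmem _ hb2
    have hall : ∀ z : Fin n, pml Q z ≤ Real.log (α / q i0) := by
      intro z
      rw [pml]
      rcases (hmargY_nn z).eq_or_lt with h | hm0
      · rw [← h, div_zero, Real.log_zero]; exact hb2
      · have hsm : (⨆ x, condYX Q x z) ≤ α / q i0 * margY Q z := by
          refine ciSup_le fun x => ?_
          rw [div_mul_eq_mul_div, le_div_iff₀ hq1pos]
          exact hA x z
        have hdiv : (⨆ x, condYX Q x z) / margY Q z ≤ α / q i0 := by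
          rw [div_le_iff₀ hm0]; linarith
        rcases (div_nonneg (hsup_nn z) (hmargY_nn z)).eq_or_lt with h0 | h0
        · rw [← h0, Real.log_zero]; exact hb2
        · exact Real.log_le_log h0 hdiv
    have : Finset.univ.filter (fun z : Fin n => pml Q z ≤ Real.log (α / q i0))
        = Finset.univ := by
      apply Finset.filter_true_of_mem
      intro z _; exact hall z
    rw [this, hsum_margY]
    linarith
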